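/- Let r > 0, let θ ∈ (−π/2, π/2) (so cos θ > 0), let s > 0 and K > 0 be real numbers, and set D = K·s. Assume 2r ≠ D. Then ∫_{−K/2}^{K/2} (r·sin θ − k·s)² / (r² + (k·s)² − 2·k·s·r·sin θ) dk = K − (r·cos θ / s)·( π·𝟙[2r < D] + arctan( D·r·cos θ / (r² − D²/4) ) ). -/

import Mathlib

open Real intervalIntegral

private lemma div_div_aux_abc (D a T : ℝ) (ha : a ≠ 0) (hT : T ≠ 0) :
    D / a / (T / a ^ 2) = D * a / T := by
  field_simp

/-- Closed form of the near-field geometric integral (step (a)-(b) in the proof of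
Corollary 1): `∫_{-K/2}^{K/2} (r sinθ - ks)²/(r² + (ks)² - 2ksr sinθ) dk
  = K - (r cosθ / s)(π·𝟙[2r<D] + arctan(D r cosθ/(r² - D²/4)))` with `D = Ks`. -/
theorem integral_sin_sq_theta_k
    (r θ s K D : ℝ) (hr : 0 < r) (hθ : θ ∈ Set.Ioo (-(Real.pi / 2)) (Real.pi / 2))
    (hs : 0 < s) (hK : 0 < K) (hD : D = K * s) (hne : 2 * r ≠ D) :
    ∫ k in (-(K / 2))..(K / 2),
        (r * Real.sin θ - k * s) ^ 2 /
          (r ^ 2 + (k * s) ^ 2 - 2 * k * s * r * Real.sin θ)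
      = K - (r * Real.cos θ / s) *
          (Real.pi * (if 2 * r < D then (1 : ℝ) else 0)
            + Real.arctan (D * r * Real.cos θ / (r ^ 2 - D ^ 2 / 4))) := by
  have hcos : 0 < Real.cos θ := Real.cos_pos_of_mem_Ioo hθ
  obtain ⟨a, ha_def⟩ : ∃ a : ℝ, a = r * Real.cos θ := ⟨_, rfl⟩
  obtain ⟨c, hc_def⟩ : ∃ c : ℝ, c = r * Real.sin θ := ⟨_, rfl⟩
  have ha : 0 < a := ha_def ▸ mul_pos hr hcos
  have ha' : a ≠ 0 := ha.ne'
  have hs' : s ≠ 0 := hs.ne'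
  have hca : c ^ 2 + a ^ 2 = r ^ 2 := by
    rw [hc_def, ha_def]
    nlinarith [Real.sin_sq_add_cos_sq θ]
  have hcr : c ≤ r := by
    rw [hc_def]
    nlinarith [Real.sin_le_one θ, hr]
  -- rewrite the integrand
  have key : ∀ k : ℝ,
      (r * Real.sin θ - k * s) ^ 2 /
          (r ^ 2 + (k * s) ^ 2 - 2 * k * s * r * Real.sin θ)
        = 1 - a ^ 2 / ((k * s - c) ^ 2 + a ^ 2) := by
    intro k
    have hden : r ^ 2 + (k * s) ^ 2 - 2 * k * s * r * Real.sin θ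
        = (k * s - c) ^ 2 + a ^ 2 := by
      linear_combination (-1 : ℝ) * hca + 2 * k * s * hc_def
    have hnum : (r * Real.sin θ - k * s) ^ 2 = (k * s - c) ^ 2 := by
      rw [hc_def]; ring
    have hpos : 0 < (k * s - c) ^ 2 + a ^ 2 := by positivity
    rw [hden, hnum]
    field_simp
    ring
  rw [intervalIntegral.integral_congr (fun k _ => key k)]
  -- FTC
  have hderiv : ∀ k : ℝ, HasDerivAt (fun k : ℝ => k - (a / s) * Real.arctan ((k * s - c) / a))
      (1 - a ^ 2 / ((k * s - c) ^ 2 + a ^ 2)) k := by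
    intro k
    have h1 : HasDerivAt (fun k : ℝ => (k * s - c) / a) (s / a) k := by
      have := (((hasDerivAt_id k).mul_const s).sub_const c).div_const a
      simpa using this
    have h2 := (Real.hasDerivAt_arctan ((k * s - c) / a)).comp k h1
    have h3 := (hasDerivAt_id k).sub (h2.const_mul (a / s))
    refine h3.congr_deriv ?_
    have h4 : (0:ℝ) < 1 + ((k * s - c) / a) ^ 2 := by positivity
    have h5 : (0:ℝ) < (k * s - c) ^ 2 + a ^ 2 := by positivity
    field_simp
    ring
  have hcont : Continuous fun k : ℝ => 1 - a ^ 2 / ((k * s - c) ^ 2 + a ^ 2) := by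
    apply Continuous.sub continuous_const
    apply Continuous.div continuous_const (by continuity)
    intro k
    positivity
  rw [intervalIntegral.integral_eq_sub_of_hasDerivAt (fun k _ => hderiv k)
    (hcont.intervalIntegrable _ _)]
  rw [show K / 2 * s = D / 2 by rw [hD]; ring,
      show -(K / 2) * s = -(D / 2) by rw [hD]; ring,
      show (-(D / 2) - c) / a = -((D / 2 + c) / a) by ring, Real.arctan_neg,
      show D * r * Real.cos θ = D * a by rw [ha_def]; ring,
      show r * Real.cos θ = a from ha_def.symm]
  have hD0 : 0 < D := by rw [hD]; positivity
  set x : ℝ := (D / 2 - c) / a with hx_def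
  set y : ℝ := (D / 2 + c) / a with hy_def
  have hsum : Real.arctan x + Real.arctan y
      = Real.pi * (if 2 * r < D then (1 : ℝ) else 0)
        + Real.arctan (D * a / (r ^ 2 - D ^ 2 / 4)) := by
    have hxy : 1 - x * y = (r ^ 2 - D ^ 2 / 4) / a ^ 2 := by
      rw [hx_def, hy_def]
      field_simp
      nlinarith [hca]
    have hxysum : x + y = D / a := by rw [hx_def, hy_def]; field_simp; ring
    rcases lt_or_gt_of_ne hne with h2r | h2r
    · -- 2r < D : x*y > 1
      have hr2 : r ^ 2 - D ^ 2 / 4 < 0 := by nlinarith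
      have hxygt : 1 < x * y := by
        have h6 : 1 - x * y < 0 := by
          rw [hxy]; exact div_neg_of_neg_of_pos hr2 (by positivity)
        linarith
      have hxpos : 0 < x := by
        rw [hx_def]
        apply div_pos _ ha
        linarith
      rw [Real.arctan_add_eq_add_pi hxygt hxpos, hxysum, hxy]
      have h7 : D / a / ((r ^ 2 - D ^ 2 / 4) / a ^ 2) = D * a / (r ^ 2 - D ^ 2 / 4) := by
        exact div_div_aux_abc D a _ ha' hr2.ne
      rw [h7, if_pos h2r]
      ring
    · -- D < 2r : x*y < 1
      have hr2 : 0 < r ^ 2 - D ^ 2 / 4 := by nlinarith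
      have hxylt : x * y < 1 := by
        have h6 : 0 < 1 - x * y := by rw [hxy]; positivity
        linarith
      rw [Real.arctan_add hxylt, hxysum, hxy]
      have h7 : D / a / ((r ^ 2 - D ^ 2 / 4) / a ^ 2) = D * a / (r ^ 2 - D ^ 2 / 4) := by
        exact div_div_aux_abc D a _ ha' hr2.ne'
      rw [h7, if_neg (not_lt.mpr (le_of_lt h2r))]
      ring
  linear_combination (-(a / s)) * hsum
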